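/- Let L ≥ 3 and let A be the L×3 matrix with rows (1, cos φᵢ, sin φᵢ). If AᵀA is invertible, then trace((AᵀA)⁻¹) ≥ 5/L, with equality if the phases are equally spaced, i.e., φₗ = φ₀ + 2π(l−1)/L for some φ₀. -/

import Mathlib

set_option maxHeartbeats 1000000


open Real Matrix

lemma exp_sum_zero_aux (L : ℕ) (hL : 3 ≤ L) (φ₀ : ℝ) (k : ℕ) (hk0 : 0 < k) (hkL : k < L) :
    ∑ l : Fin L, Complex.exp (((k : ℝ) * (φ₀ + 2 * Real.pi * l / L) : ℝ) * Complex.I) = 0 := by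
  have hLpos : (0:ℝ) < L := by
    have : 0 < L := by omega
    exact_mod_cast this
  set z : ℂ := Complex.exp (((2 * Real.pi * k / L : ℝ) : ℂ) * Complex.I) with hz
  have hterm : ∀ l : Fin L,
      Complex.exp (((k : ℝ) * (φ₀ + 2 * Real.pi * l / L) : ℝ) * Complex.I)
        = Complex.exp (((k : ℝ) * φ₀ : ℝ) * Complex.I) * z ^ (l : ℕ) := by
    intro l
    rw [hz, ← Complex.exp_nat_mul, ← Complex.exp_add]
    congr 1
    push_cast
    have hLne : (L:ℂ) ≠ 0 := by
      exact_mod_cast (by positivity : (L:ℝ) ≠ 0) <;> norm_cast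
    field_simp
  rw [Finset.sum_congr rfl (fun l _ => hterm l), ← Finset.mul_sum]
  have hz1 : z ≠ 1 := by
    intro h
    have hre : Real.cos (2 * Real.pi * k / L) = 1 := by
      have h2 := congrArg Complex.re h
      rwa [hz, Complex.exp_ofReal_mul_I_re, Complex.one_re] at h2
    have hkpos : (0:ℝ) < k := by exact_mod_cast hk0
    have h1 : (0:ℝ) < 2 * Real.pi * k / L := by positivity
    have h2 : 2 * Real.pi * k / L < 2 * Real.pi := by
      rw [div_lt_iff₀ hLpos]
      have hkL' : (k:ℝ) < L := by exact_mod_cast hkL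
      nlinarith [Real.pi_pos]
    have := (Real.cos_eq_one_iff_of_lt_of_lt (by linarith) h2).mp hre
    linarith
  have hzL : z ^ L = 1 := by
    rw [hz, ← Complex.exp_nat_mul]
    have heq : (L:ℂ) * (((2 * Real.pi * k / L : ℝ) : ℂ) * Complex.I)
        = (k:ℕ) * (2 * Real.pi * Complex.I) := by
      have hLne : (L:ℂ) ≠ 0 := by
        have : (L:ℝ) ≠ 0 := ne_of_gt hLpos
        exact_mod_cast this
      push_cast
      field_simp
    rw [heq, Complex.exp_nat_mul, Complex.exp_two_pi_mul_I, one_pow]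
  rw [Fin.sum_univ_eq_sum_range (fun i => z ^ i), geom_sum_eq hz1, hzL]
  simp

theorem stmt_8 (L : ℕ) (hL : 3 ≤ L) (φ : Fin L → ℝ)
    (A : Matrix (Fin L) (Fin 3) ℝ)
    (hA : A = Matrix.of fun l i => ![1, Real.cos (φ l), Real.sin (φ l)] i)
    (hinv : IsUnit (Aᵀ * A)) :
    (Aᵀ * A)⁻¹.trace ≥ 5 / L ∧
    ((∃ φ₀ : ℝ, ∀ l : Fin L, φ l = φ₀ + 2 * Real.pi * l / L) →
      (Aᵀ * A)⁻¹.trace = 5 / L) := by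
  have hLpos : (0:ℝ) < L := by
    have : 0 < L := by omega
    exact_mod_cast this
  set M := Aᵀ * A with hMdef
  set a := ∑ l : Fin L, Real.cos (φ l) with ha_def
  set b := ∑ l : Fin L, Real.sin (φ l) with hb_def
  set p := ∑ l : Fin L, Real.cos (φ l) * Real.cos (φ l) with hp_def
  set q := ∑ l : Fin L, Real.cos (φ l) * Real.sin (φ l) with hq_def
  set s := ∑ l : Fin L, Real.sin (φ l) * Real.sin (φ l) with hs_def
  have hM : M = !![(L:ℝ), a, b; a, p, q; b, q, s] := by
    rw [hMdef, hA]
    ext i j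
    fin_cases i <;> fin_cases j <;>
      simp [Matrix.mul_apply, ha_def, hb_def, hp_def, hq_def, hs_def,
        Finset.mul_sum, Finset.sum_mul, mul_comm]
  -- p + s = L
  have hps : p + s = (L:ℝ) := by
    rw [hp_def, hs_def, ← Finset.sum_add_distrib]
    have : ∀ l : Fin L, Real.cos (φ l) * Real.cos (φ l)
        + Real.sin (φ l) * Real.sin (φ l) = 1 := by
      intro l
      have := Real.sin_sq_add_cos_sq (φ l)
      nlinarith [this]
    rw [Finset.sum_congr rfl (fun l _ => this l)]
    simp
  -- positive definiteness
  have hdetU : IsUnit M.det := (Matrix.isUnit_iff_isUnit_det M).mp hinv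
  have hsemi : M.PosSemidef := by
    rw [hMdef, ← Matrix.conjTranspose_eq_transpose_of_trivial]
    exact Matrix.posSemidef_conjTranspose_mul_self A
  have hPD : M.PosDef := by
    refine Matrix.PosDef.of_dotProduct_mulVec_pos hsemi.1 (fun x hx => ?_)
    rcases lt_or_eq_of_le (hsemi.dotProduct_mulVec_nonneg x) with h | h
    · exact h
    · exfalso
      have hMx : M *ᵥ x = 0 := (hsemi.dotProduct_mulVec_zero_iff x).mp h.symm
      have : x = 0 := by
        have h1 : M⁻¹ *ᵥ (M *ᵥ x) = x := by
          rw [Matrix.mulVec_mulVec, Matrix.nonsing_inv_mul M hdetU, Matrix.one_mulVec]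
        rw [hMx, Matrix.mulVec_zero] at h1
        exact h1.symm
      exact hx this
  have hform : ∀ x y z : ℝ, star ![x, y, z] ⬝ᵥ (M *ᵥ ![x, y, z])
      = L*x*x + p*y*y + s*z*z + 2*a*x*y + 2*b*x*z + 2*q*y*z := by
    intro x y z
    rw [hM]
    simp [Matrix.mulVec, dotProduct, Fin.sum_univ_three]
    ring
  have hp0 : 0 < p := by
    have h := hPD.dotProduct_mulVec_pos (x := ![0, 1, 0]) (by
      intro h; simpa using congrFun h 1)
    rw [hform] at h
    nlinarith [h]
  have hs0 : 0 < s := by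
    have h := hPD.dotProduct_mulVec_pos (x := ![0, 0, 1]) (by
      intro h; simpa using congrFun h 2)
    rw [hform] at h
    nlinarith [h]
  have hdetpos : 0 < M.det := hPD.det_pos
  have hdet : M.det = L*(p*s) - L*(q*q) - a*a*s + 2*(a*b*q) - b*b*p := by
    rw [hM, Matrix.det_fin_three]
    simp
    ring
  -- minors positive
  have hm1 : 0 < p*s - q*q := by
    have h := hPD.dotProduct_mulVec_pos (x := ![0, s, -q]) (by
      intro h
      have := congrFun h 1
      simp at this
      exact absurd this (ne_of_gt hs0))
    rw [hform] at h
    nlinarith [h, hs0]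
  have hm2 : 0 < L*s - b*b := by
    have h := hPD.dotProduct_mulVec_pos (x := ![s, 0, -b]) (by
      intro h
      have := congrFun h 0
      simp at this
      exact absurd this (ne_of_gt hs0))
    rw [hform] at h
    nlinarith [h, hs0]
  have hm3 : 0 < L*p - a*a := by
    have h := hPD.dotProduct_mulVec_pos (x := ![p, -a, 0]) (by
      intro h
      have := congrFun h 0
      simp at this
      exact absurd this (ne_of_gt hp0))
    rw [hform] at h
    nlinarith [h, hp0]
  -- key inequalities
  have k1 : 0 ≤ a*a*s - 2*(a*b*q) + b*b*p := by
    nlinarith [sq_nonneg (a*s - b*q), mul_nonneg hm1.le (sq_nonneg b), hs0]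
  have k2 : 0 ≤ L*(q*q) + a*a*s - 2*(a*b*q) := by
    nlinarith [sq_nonneg (a*s - b*q), mul_nonneg hm2.le (sq_nonneg q), hs0]
  have k3 : 0 ≤ L*(q*q) - 2*(a*b*q) + b*b*p := by
    nlinarith [sq_nonneg (b*p - a*q), mul_nonneg hm3.le (sq_nonneg q), hp0]
  have g1 : M.det ≤ L*(p*s - q*q) := by
    have : L*(p*s - q*q) - M.det = a*a*s - 2*(a*b*q) + b*b*p := by
      rw [hdet]; ring
    linarith [k1, this]
  have g2 : M.det ≤ p*(L*s - b*b) := by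
    have : p*(L*s - b*b) - M.det = L*(q*q) + a*a*s - 2*(a*b*q) := by
      rw [hdet]; ring
    linarith [k2, this]
  have g3 : M.det ≤ s*(L*p - a*a) := by
    have : s*(L*p - a*a) - M.det = L*(q*q) - 2*(a*b*q) + b*b*p := by
      rw [hdet]; ring
    linarith [k3, this]
  have hps4 : 4*(p*s) ≤ (L:ℝ)*L := by nlinarith [sq_nonneg (p - s), hps]
  set S := (p*s - q*q) + (L*s - b*b) + (L*p - a*a) with hS_def
  have hmain : 5 * M.det ≤ L * S := by
    have hpspos : 0 < p * s := mul_pos hp0 hs0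
    have f1 : p*s*M.det ≤ p*s*(L*(p*s - q*q)) :=
      mul_le_mul_of_nonneg_left g1 hpspos.le
    have f2 : L*s*M.det ≤ L*s*(p*(L*s - b*b)) :=
      mul_le_mul_of_nonneg_left g2 (by positivity)
    have f3 : L*p*M.det ≤ L*p*(s*(L*p - a*a)) :=
      mul_le_mul_of_nonneg_left g3 (by positivity)
    have f4 : M.det*(4*(p*s)) ≤ M.det*((L:ℝ)*L) :=
      mul_le_mul_of_nonneg_left hps4 hdetpos.le
    have key : p*s*(5 * M.det) ≤ p*s*(L * S) := by
      have f5 : M.det*((L:ℝ)*(p+s)) = M.det*((L:ℝ)*L) := by rw [hps]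
      rw [hS_def]
      nlinarith [f1, f2, f3, f4, f5]
    exact le_of_mul_le_mul_left key hpspos
  -- trace formula
  have htr : M⁻¹.trace = (M.det)⁻¹ * S := by
    rw [Matrix.inv_def, Matrix.trace_smul, Ring.inverse_eq_inv, smul_eq_mul]
    congr 1
    rw [hM, Matrix.adjugate_fin_three, Matrix.trace_fin_three, hS_def]
    simp
    try ring
  constructor
  · rw [htr, inv_mul_eq_div, ge_iff_le, div_le_div_iff₀ hLpos hdetpos]
    linarith [hmain]
  · rintro ⟨φ₀, hphi⟩
    -- trigonometric sums vanish
    have hsum1 : ∑ l : Fin L, Complex.exp (((1:ℕ) * (φ₀ + 2 * Real.pi * l / L) : ℝ) * Complex.I) = 0 :=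
      exp_sum_zero_aux L hL φ₀ 1 one_pos (by omega)
    have hsum2 : ∑ l : Fin L, Complex.exp (((2:ℕ) * (φ₀ + 2 * Real.pi * l / L) : ℝ) * Complex.I) = 0 :=
      exp_sum_zero_aux L hL φ₀ 2 two_pos (by omega)
    have hc1 : ∑ l : Fin L, Real.cos (φ l) = 0 := by
      have := congrArg Complex.re hsum1
      rw [Complex.re_sum, Complex.zero_re] at this
      rw [← this]
      apply Finset.sum_congr rfl
      intro l _
      rw [Complex.exp_ofReal_mul_I_re, hphi l]
      norm_num
    have hs1 : ∑ l : Fin L, Real.sin (φ l) = 0 := by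
      have := congrArg Complex.im hsum1
      rw [Complex.im_sum, Complex.zero_im] at this
      rw [← this]
      apply Finset.sum_congr rfl
      intro l _
      rw [Complex.exp_ofReal_mul_I_im, hphi l]
      norm_num
    have hc2 : ∑ l : Fin L, Real.cos (2 * φ l) = 0 := by
      have := congrArg Complex.re hsum2
      rw [Complex.re_sum, Complex.zero_re] at this
      rw [← this]
      apply Finset.sum_congr rfl
      intro l _
      rw [Complex.exp_ofReal_mul_I_re, hphi l]
      norm_num
    have hs2 : ∑ l : Fin L, Real.sin (2 * φ l) = 0 := by
      have := congrArg Complex.im hsum2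
      rw [Complex.im_sum, Complex.zero_im] at this
      rw [← this]
      apply Finset.sum_congr rfl
      intro l _
      rw [Complex.exp_ofReal_mul_I_im, hphi l]
      norm_num
    have ha0 : a = 0 := by rw [ha_def]; exact hc1
    have hb0 : b = 0 := by rw [hb_def]; exact hs1
    have hq0 : q = 0 := by
      rw [hq_def]
      have : ∀ l : Fin L, Real.cos (φ l) * Real.sin (φ l) = Real.sin (2 * φ l) / 2 := by
        intro l
        rw [Real.sin_two_mul]
        ring
      rw [Finset.sum_congr rfl (fun l _ => this l), ← Finset.sum_div, hs2]
      norm_num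
    have hp2 : p = L / 2 := by
      rw [hp_def]
      have : ∀ l : Fin L, Real.cos (φ l) * Real.cos (φ l)
          = 1 / 2 + Real.cos (2 * φ l) / 2 := by
        intro l
        have := Real.cos_sq (φ l)
        nlinarith [this]
      rw [Finset.sum_congr rfl (fun l _ => this l), Finset.sum_add_distrib]
      have h2 : ∑ l : Fin L, Real.cos (2 * φ l) / 2 = 0 := by
        rw [← Finset.sum_div, hc2]
        norm_num
      rw [h2, add_zero]
      rw [Finset.sum_const, Finset.card_univ, Fintype.card_fin, nsmul_eq_mul]
      ring
    have hs2' : s = L / 2 := by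
      have := hps
      rw [hp2] at this
      linarith
    rw [htr, hS_def, hdet, ha0, hb0, hq0, hp2, hs2']
    have hLne : (L:ℝ) ≠ 0 := ne_of_gt hLpos
    field_simp
    ring
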